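/- arXiv:1906.06736 — 4 statements merged into one kernel-verified Lean document; each statement's English description precedes it below -/
import Mathlib

section
/- For probability distributions F₁,...,F_k and G₁,...,G_k on ℝ, the Lévy distance between the convolutions satisfies ρ(F₁ * ⋯ * F_k, G₁ * ⋯ * G_k) ≤ Σ_{j=1}^k ρ(F_j, G_j). -/
open MeasureTheory Set

/-- The Lévy distance between two distribution functions on `ℝ`. -/
noncomputable def levyDist (F G : ℝ → ℝ) : ℝ :=
  sInf {ε : ℝ | 0 < ε ∧ ∀ x : ℝ, F (x - ε) - ε ≤ G x ∧ G x ≤ F (x + ε) + ε}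

/-- The cumulative distribution function of a measure on `ℝ`. -/
noncomputable def cdf (μ : Measure ℝ) : ℝ → ℝ := fun x => (μ (Iic x)).toReal

/-- The Lévy distance between two probability measures on `ℝ`. -/
noncomputable def levyDistM (μ ν : Measure ℝ) : ℝ := levyDist (cdf μ) (cdf ν)

/-- The convolution `F 0 ∗ F 1 ∗ ⋯ ∗ F (k-1)` of a finite family of measures on `ℝ`
(with the empty convolution being `δ₀`). -/
noncomputable def convSeq (F : ℕ → Measure ℝ) : ℕ → Measure ℝ
  | 0 => Measure.dirac 0
  | n + 1 => (convSeq F n).conv (F n)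

namespace LevyAux

/-- The defining set of the Lévy distance. -/
def levySet (F G : ℝ → ℝ) : Set ℝ :=
  {ε : ℝ | 0 < ε ∧ ∀ x : ℝ, F (x - ε) - ε ≤ G x ∧ G x ≤ F (x + ε) + ε}

lemma levyDist_eq (F G : ℝ → ℝ) : levyDist F G = sInf (levySet F G) := rfl

lemma cdf_nonneg (μ : Measure ℝ) (x : ℝ) : 0 ≤ cdf μ x := ENNReal.toReal_nonneg

lemma cdf_le_one (μ : Measure ℝ) [IsProbabilityMeasure μ] (x : ℝ) : cdf μ x ≤ 1 := by
  rw [cdf]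
  exact ENNReal.toReal_le_of_le_ofReal one_pos.le (by simpa using prob_le_one (μ := μ) (s := Iic x))

lemma bddBelow_levySet (F G : ℝ → ℝ) : BddBelow (levySet F G) :=
  ⟨0, fun ε hε => hε.1.le⟩

lemma two_mem_levySet (μ ν : Measure ℝ) [IsProbabilityMeasure μ] [IsProbabilityMeasure ν] :
    (2 : ℝ) ∈ levySet (cdf μ) (cdf ν) := by
  refine ⟨two_pos, fun x => ⟨?_, ?_⟩⟩
  · have := cdf_le_one μ (x - 2); have := cdf_nonneg ν x; linarith
  · have := cdf_le_one ν x; have := cdf_nonneg μ (x + 2); linarith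

lemma levySet_nonempty (μ ν : Measure ℝ) [IsProbabilityMeasure μ] [IsProbabilityMeasure ν] :
    (levySet (cdf μ) (cdf ν)).Nonempty := ⟨2, two_mem_levySet μ ν⟩

lemma conv_Iic (μ lam : Measure ℝ) [SFinite μ] [SFinite lam] (x : ℝ) :
    (μ.conv lam) (Iic x) = ∫⁻ t, μ (Iic (x - t)) ∂lam := by
  rw [Measure.conv_comm]
  unfold Measure.conv
  rw [Measure.map_apply (by fun_prop) measurableSet_Iic,
    Measure.prod_apply (s := (fun p : ℝ × ℝ => p.1 + p.2) ⁻¹' Iic x) ((measurable_fst.add measurable_snd) measurableSet_Iic)]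
  congr 1 with t
  congr 1
  ext s
  simp [le_sub_iff_add_le']

/-- Monotone one-sided bound passes to convolutions. -/
lemma cdf_conv_bound (μ ν lam : Measure ℝ) [IsProbabilityMeasure μ] [IsProbabilityMeasure ν]
    [IsProbabilityMeasure lam] {ε : ℝ} (hε : 0 ≤ ε)
    (h : ∀ y : ℝ, cdf μ y ≤ cdf ν (y + ε) + ε) :
    ∀ y : ℝ, cdf (μ.conv lam) y ≤ cdf (ν.conv lam) (y + ε) + ε := by
  intro y
  have key : ∀ s : ℝ, μ (Iic s) ≤ ν (Iic (s + ε)) + ENNReal.ofReal ε := by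
    intro s
    have h1 := h s
    rw [cdf, cdf] at h1
    calc μ (Iic s) = ENNReal.ofReal ((μ (Iic s)).toReal) :=
          (ENNReal.ofReal_toReal (measure_ne_top μ _)).symm
      _ ≤ ENNReal.ofReal ((ν (Iic (s + ε))).toReal + ε) := ENNReal.ofReal_le_ofReal h1
      _ = ν (Iic (s + ε)) + ENNReal.ofReal ε := by
          rw [ENNReal.ofReal_add ENNReal.toReal_nonneg hε,
            ENNReal.ofReal_toReal (measure_ne_top ν _)]
  have hle : (μ.conv lam) (Iic y) ≤ (ν.conv lam) (Iic (y + ε)) + ENNReal.ofReal ε := by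
    rw [conv_Iic, conv_Iic]
    calc ∫⁻ t, μ (Iic (y - t)) ∂lam
        ≤ ∫⁻ t, (ν (Iic (y + ε - t)) + ENNReal.ofReal ε) ∂lam := by
          refine lintegral_mono fun t => ?_
          have := key (y - t)
          rwa [show y - t + ε = y + ε - t by ring] at this
      _ = (∫⁻ t, ν (Iic (y + ε - t)) ∂lam) + ENNReal.ofReal ε := by
          rw [lintegral_add_right _ measurable_const, lintegral_const, measure_univ, mul_one]
  have hfin : (ν.conv lam) (Iic (y + ε)) + ENNReal.ofReal ε ≠ ⊤ :=
    ENNReal.add_ne_top.mpr ⟨measure_ne_top _ _, ENNReal.ofReal_ne_top⟩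
  have := ENNReal.toReal_mono hfin hle
  rwa [ENNReal.toReal_add (measure_ne_top _ _) ENNReal.ofReal_ne_top,
    ENNReal.toReal_ofReal hε] at this

lemma levySet_conv (μ ν lam : Measure ℝ) [IsProbabilityMeasure μ] [IsProbabilityMeasure ν]
    [IsProbabilityMeasure lam] {ε : ℝ} (hε : ε ∈ levySet (cdf μ) (cdf ν)) :
    ε ∈ levySet (cdf (μ.conv lam)) (cdf (ν.conv lam)) := by
  obtain ⟨hpos, h⟩ := hε
  have h1 : ∀ y : ℝ, cdf μ y ≤ cdf ν (y + ε) + ε := fun y => by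
    have := (h (y + ε)).1; rw [show y + ε - ε = y by ring] at this; linarith
  have h2 : ∀ y : ℝ, cdf ν y ≤ cdf μ (y + ε) + ε := fun y => (h y).2
  have c1 := cdf_conv_bound μ ν lam hpos.le h1
  have c2 := cdf_conv_bound ν μ lam hpos.le h2
  refine ⟨hpos, fun x => ⟨?_, ?_⟩⟩
  · have := c1 (x - ε); rw [show x - ε + ε = x by ring] at this; linarith
  · exact c2 x

lemma levyDistM_conv_right (μ ν lam : Measure ℝ) [IsProbabilityMeasure μ]
    [IsProbabilityMeasure ν] [IsProbabilityMeasure lam] :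
    levyDistM (μ.conv lam) (ν.conv lam) ≤ levyDistM μ ν :=
  csInf_le_csInf (bddBelow_levySet _ _) (levySet_nonempty μ ν)
    (fun _ hε => levySet_conv μ ν lam hε)

lemma levyDistM_triangle (μ κ ν : Measure ℝ) [IsProbabilityMeasure μ]
    [IsProbabilityMeasure κ] [IsProbabilityMeasure ν] :
    levyDistM μ ν ≤ levyDistM μ κ + levyDistM κ ν := by
  have hadd : ∀ ε₁ ∈ levySet (cdf μ) (cdf κ), ∀ ε₂ ∈ levySet (cdf κ) (cdf ν),
      ε₁ + ε₂ ∈ levySet (cdf μ) (cdf ν) := by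
    rintro ε₁ ⟨h1p, h1⟩ ε₂ ⟨h2p, h2⟩
    refine ⟨by linarith, fun x => ⟨?_, ?_⟩⟩
    · have a := (h1 (x - ε₂)).1
      have b := (h2 x).1
      rw [show x - ε₂ - ε₁ = x - (ε₁ + ε₂) by ring] at a
      linarith
    · have a := (h1 (x + ε₂)).2
      have b := (h2 x).2
      rw [show x + ε₂ + ε₁ = x + (ε₁ + ε₂) by ring] at a
      linarith
  rw [levyDistM, levyDistM, levyDistM, levyDist_eq, levyDist_eq, levyDist_eq]
  rw [← sub_le_iff_le_add']
  refine le_csInf (levySet_nonempty κ ν) fun ε₂ h2 => ?_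
  rw [sub_le_iff_le_add, add_comm, ← sub_le_iff_le_add]
  refine le_csInf (levySet_nonempty μ κ) fun ε₁ h1 => ?_
  rw [sub_le_iff_le_add]
  exact csInf_le (bddBelow_levySet _ _) (hadd ε₁ h1 ε₂ h2)

lemma levyDistM_self (μ : Measure ℝ) [IsProbabilityMeasure μ] : levyDistM μ μ ≤ 0 := by
  have hmono : Monotone (cdf μ) := fun a b hab =>
    ENNReal.toReal_mono (measure_ne_top _ _) (measure_mono (Iic_subset_Iic.2 hab))
  refine le_of_forall_pos_le_add fun ε hε => ?_
  rw [zero_add]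
  refine csInf_le (bddBelow_levySet _ _) ⟨hε, fun x => ⟨?_, ?_⟩⟩
  · have := hmono (show x - ε ≤ x by linarith); linarith
  · have := hmono (show x ≤ x + ε by linarith); linarith

theorem convSeq_prob (F : ℕ → Measure ℝ) (hF : ∀ j, IsProbabilityMeasure (F j)) (k : ℕ) :
    IsProbabilityMeasure (convSeq F k) := by
  induction k with
  | zero => exact (by infer_instance : IsProbabilityMeasure (Measure.dirac (0:ℝ)))
  | succ n ih =>
    have := hF n
    exact Measure.probabilitymeasure_of_probabilitymeasures_conv _ _

end LevyAux

open LevyAux in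
/-- Subadditivity of the Lévy metric under convolution:
`ρ(F₁ ∗ ⋯ ∗ F_k, G₁ ∗ ⋯ ∗ G_k) ≤ ∑_{j=1}^k ρ(F_j, G_j)`. -/
theorem levyDist_conv_le (F G : ℕ → Measure ℝ)
    (hF : ∀ j, IsProbabilityMeasure (F j)) (hG : ∀ j, IsProbabilityMeasure (G j))
    (k : ℕ) :
    levyDistM (convSeq F k) (convSeq G k) ≤ ∑ j ∈ Finset.range k, levyDistM (F j) (G j) := by
  induction k with
  | zero =>
    simpa [convSeq] using levyDistM_self (Measure.dirac (0:ℝ))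
  | succ n ih =>
    have hFn := hF n
    have hGn := hG n
    have hA := convSeq_prob F hF n
    have hB := convSeq_prob G hG n
    have hA1 := convSeq_prob F hF (n+1)
    have hB1 := convSeq_prob G hG (n+1)
    have step1 : levyDistM (convSeq F (n+1)) (convSeq G (n+1)) ≤
        levyDistM ((convSeq F n).conv (F n)) ((convSeq G n).conv (F n)) +
        levyDistM ((convSeq G n).conv (F n)) ((convSeq G n).conv (G n)) := by
      exact levyDistM_triangle _ _ _
    have step2 : levyDistM ((convSeq F n).conv (F n)) ((convSeq G n).conv (F n)) ≤
        levyDistM (convSeq F n) (convSeq G n) := levyDistM_conv_right _ _ _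
    have step3 : levyDistM ((convSeq G n).conv (F n)) ((convSeq G n).conv (G n)) ≤
        levyDistM (F n) (G n) := by
      rw [Measure.conv_comm (convSeq G n) (F n), Measure.conv_comm (convSeq G n) (G n)]
      exact levyDistM_conv_right _ _ _
    rw [Finset.sum_range_succ]
    calc levyDistM (convSeq F (n+1)) (convSeq G (n+1)) ≤ _ := step1
      _ ≤ levyDistM (convSeq F n) (convSeq G n) + levyDistM (F n) (G n) :=
          add_le_add step2 step3
      _ ≤ _ := add_le_add ih le_rfl
end

section
/- Let μ = Σ_{j=0}^n a_j δ_j be a probability distribution on {0,...,n} with a_n > 0 whose characteristic function has no zeros. Then there exist a drift γ ∈ {0,1,...,n} and a finite signed measure ν on ℤ \ {0} such that the characteristic function of μ equals exp(iθγ + ∫_ℝ (e^{iθx} − 1) dν(x)) for all θ ∈ ℝ; moreover γ equals the number of roots (with multiplicity) of the polynomial w ↦ Σ_{j=0}^n a_j w^j lying strictly inside the unit circle. -/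
open Complex Polynomial

section Helpers

variable {α M : Type*}

private lemma hasSum_multisetSum [AddCommMonoid M] [TopologicalSpace M] [ContinuousAdd M]
    (s : Multiset α) (f : α → ℤ → M) (g : α → M)
    (h : ∀ z ∈ s, HasSum (f z) (g z)) :
    HasSum (fun m => (s.map (fun z => f z m)).sum) ((s.map g).sum) := by
  induction s using Multiset.induction with
  | empty => simpa using hasSum_zero
  | cons z s ih =>
    simp only [Multiset.map_cons, Multiset.sum_cons]
    exact (h z (Multiset.mem_cons_self ..)).add
      (ih fun w hw => h w (Multiset.mem_cons_of_mem hw))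

private lemma hasSum_int_neg [AddCommMonoid M] [TopologicalSpace M]
    {f : ℤ → M} {g : ℕ → M} {s : M}
    (h0 : ∀ m : ℤ, ¬ m < 0 → f m = 0) (he : ∀ k : ℕ, f (-((k : ℤ) + 1)) = g k)
    (hg : HasSum g s) : HasSum f s := by
  have hinj : Function.Injective (fun k : ℕ => -((k : ℤ) + 1)) := by
    intro a b hab; simp only at hab; omega
  refine (Function.Injective.hasSum_iff hinj ?_).1 ?_
  · intro m hm
    refine h0 m (fun hlt => hm ⟨(-m - 1).toNat, ?_⟩)
    simp only
    rw [Int.toNat_of_nonneg (by omega)]; ring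
  · exact hg.congr_fun (fun k => he k)

private lemma hasSum_int_pos [AddCommMonoid M] [TopologicalSpace M]
    {f : ℤ → M} {g : ℕ → M} {s : M}
    (h0 : ∀ m : ℤ, ¬ 0 < m → f m = 0) (he : ∀ k : ℕ, f ((k : ℤ) + 1) = g k)
    (hg : HasSum g s) : HasSum f s := by
  have hinj : Function.Injective (fun k : ℕ => ((k : ℤ) + 1)) := by
    intro a b hab; simp only at hab; omega
  refine (Function.Injective.hasSum_iff hinj ?_).1 ?_
  · intro m hm
    refine h0 m (fun hlt => hm ⟨(m - 1).toNat, ?_⟩)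
    simp only
    rw [Int.toNat_of_nonneg (by omega)]; ring
  · exact hg.congr_fun (fun k => he k)

private lemma hasSum_log_aux {u : ℂ} (hu : ‖u‖ < 1) :
    HasSum (fun k : ℕ => -(u ^ (k + 1)) / ((k : ℂ) + 1)) (Complex.log (1 - u)) := by
  have h : HasSum (fun n : ℕ => -(u ^ n / n)) (Complex.log (1 - u)) := by
    simpa using (Complex.hasSum_taylorSeries_neg_log hu).neg
  have h2 : HasSum (fun n : ℕ => -(u ^ (n + 1) / (((n + 1 : ℕ)) : ℂ)))
      (Complex.log (1 - u)) := by
    refine (hasSum_nat_add_iff (f := fun n : ℕ => -(u ^ n / (n : ℂ))) 1).2 ?_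
    simpa using h
  refine h2.congr_fun (fun k => ?_)
  push_cast
  rw [neg_div]

private lemma multiset_sum_map_le {s : Multiset α} {f g : α → ℝ}
    (h : ∀ i ∈ s, f i ≤ g i) : (s.map f).sum ≤ (s.map g).sum := by
  induction s using Multiset.induction with
  | empty => simp
  | cons z s ih =>
    simp only [Multiset.map_cons, Multiset.sum_cons]
    exact add_le_add (h z (Multiset.mem_cons_self ..))
      (ih fun w hw => h w (Multiset.mem_cons_of_mem hw))

end Helpers


/-- A probability distribution `μ = ∑_{j=0}^n a_j δ_j` on `{0,…,n}` with `a_n > 0` whose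
characteristic function has no zeros admits a Lévy–Khintchine type representation with a
drift `γ ∈ {0,…,n}` and a finite (real-valued) signed measure `ν` on `ℤ ∖ {0}`, where
moreover `γ` is the number of roots (with multiplicity) of `w ↦ ∑_j a_j w^j` strictly
inside the unit circle. -/
theorem qid_representation_finite_lattice (n : ℕ) (a : Fin (n + 1) → ℝ)
    (ha : ∀ j, 0 ≤ a j) (hsum : ∑ j, a j = 1) (han : 0 < a (Fin.last n))
    (hnozero : ∀ θ : ℝ, ∑ j, (a j : ℂ) * Complex.exp (θ * (j : ℕ) * Complex.I) ≠ 0) :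
    ∃ (γ : ℕ) (ν : ℤ → ℝ),
      γ ≤ n ∧
      -- `ν` is a finite signed measure on `ℤ ∖ {0}`
      ν 0 = 0 ∧ Summable (fun m : ℤ => |ν m|) ∧
      -- Lévy–Khintchine type representation of the characteristic function
      (∀ θ : ℝ,
        ∑ j, (a j : ℂ) * Complex.exp (θ * (j : ℕ) * Complex.I) =
          Complex.exp (Complex.I * θ * γ +
            ∑' m : ℤ, (Complex.exp (θ * (m : ℤ) * Complex.I) - 1) * ν m)) ∧
      -- the drift is the number of roots strictly inside the unit circle
      γ = Multiset.card
            (@Multiset.filter ℂ (fun z : ℂ => ‖z‖ < 1) (Classical.decPred _)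
              (∑ j : Fin (n + 1), Polynomial.C (a j : ℂ) * Polynomial.X ^ (j : ℕ)).roots) := by
  set P : Polynomial ℂ := ∑ j : Fin (n + 1), Polynomial.C (a j : ℂ) * Polynomial.X ^ (j : ℕ)
    with hPdef
  have hane : (a (Fin.last n) : ℂ) ≠ 0 := by exact_mod_cast han.ne'
  have hcoeffn : P.coeff n = (a (Fin.last n) : ℂ) := by
    rw [hPdef, Polynomial.finset_sum_coeff]
    rw [Finset.sum_eq_single (Fin.last n)]
    · simp [Polynomial.coeff_C_mul, Polynomial.coeff_X_pow, Fin.val_last]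
    · intro j _ hj
      have hjn : (j : ℕ) ≠ n := by
        intro h; exact hj (by ext; simp [h, Fin.val_last])
      simp [Polynomial.coeff_C_mul, Polynomial.coeff_X_pow, Ne.symm hjn]
    · intro h; exact absurd (Finset.mem_univ _) h
  have hPne : P ≠ 0 := by
    intro h
    rw [h] at hcoeffn
    simp only [Polynomial.coeff_zero] at hcoeffn
    exact hane hcoeffn.symm
  have hdeg : P.natDegree = n := by
    refine le_antisymm ?_ (Polynomial.le_natDegree_of_ne_zero (by rw [hcoeffn]; exact hane))
    rw [hPdef]
    refine Polynomial.natDegree_sum_le_of_forall_le _ _ (fun j _ => ?_)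
    exact (Polynomial.natDegree_C_mul_X_pow_le _ _).trans (Nat.lt_succ_iff.mp j.isLt)
  have hlc : P.leadingCoeff = (a (Fin.last n) : ℂ) := by
    rw [Polynomial.leadingCoeff, hdeg, hcoeffn]
  have hsplits : P.Splits := IsAlgClosed.splits P
  have hcard : Multiset.card P.roots = n := by
    rw [← hdeg]; exact (Polynomial.splits_iff_card_roots).1 hsplits
  have hfact : P = Polynomial.C P.leadingCoeff * (P.roots.map fun z => X - Polynomial.C z).prod :=
    hsplits.eq_prod_roots
  have heval : ∀ θ : ℝ, ∑ j, (a j : ℂ) * Complex.exp (θ * (j : ℕ) * Complex.I)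
      = P.eval (Complex.exp (θ * Complex.I)) := by
    intro θ
    rw [hPdef, Polynomial.eval_finset_sum]
    refine Finset.sum_congr rfl (fun j _ => ?_)
    rw [Polynomial.eval_mul, Polynomial.eval_C, Polynomial.eval_pow, Polynomial.eval_X,
      ← Complex.exp_nat_mul]
    congr 1
    push_cast; ring
  have habs : ∀ z ∈ P.roots, ‖z‖ ≠ 1 := by
    intro z hz h1
    have hzr : P.eval z = 0 := (Polynomial.mem_roots hPne).1 hz
    apply hnozero (Complex.arg z)
    rw [heval]
    have hze : Complex.exp ((Complex.arg z : ℝ) * Complex.I) = z := by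
      conv_rhs => rw [← Complex.norm_mul_exp_arg_mul_I z]
      rw [h1, Complex.ofReal_one, one_mul]
    rw [hze, hzr]
  -- roots inside and outside the unit circle
  set Ri : Multiset ℂ := @Multiset.filter ℂ (fun z : ℂ => ‖z‖ < 1)
    (Classical.decPred _) P.roots with hRidef
  set Ro : Multiset ℂ := Multiset.filter (fun z : ℂ => ¬ ‖z‖ < 1) P.roots
    with hRodef
  have hRiRo : Ri + Ro = P.roots := by
    have h1 : Ri = Multiset.filter (fun z : ℂ => ‖z‖ < 1) P.roots :=
      Multiset.filter_congr (fun _ _ => Iff.rfl)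
    have h2 : Ro = Multiset.filter (fun a : ℂ => ¬ ‖a‖ < 1) P.roots :=
      Multiset.filter_congr (fun _ _ => Iff.rfl)
    rw [h1, h2]
    exact Multiset.filter_add_not _ _
  have hRimem : ∀ z ∈ Ri, ‖z‖ < 1 := by
    intro z hz
    have := Multiset.of_mem_filter hz
    simpa using this
  have hRomem : ∀ z ∈ Ro, 1 < ‖z‖ := by
    intro z hz
    have h1 := Multiset.of_mem_filter hz
    have h2 := habs z (Multiset.mem_of_mem_filter hz)
    push_neg at h1
    exact lt_of_le_of_ne h1 (Ne.symm h2)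
  have hRone : ∀ z ∈ Ro, z ≠ 0 := by
    intro z hz h0
    have := hRomem z hz
    rw [h0] at this
    simp only [norm_zero] at this
    exact absurd this (by norm_num)
  have hRoinv : ∀ z ∈ Ro, ‖z⁻¹‖ < 1 := by
    intro z hz
    rw [norm_inv]
    have h1 := hRomem z hz
    rw [inv_lt_one_iff₀]
    right; exact h1
  -- the quasi-Lévy coefficients
  set Fi : ℂ → ℤ → ℂ := fun z m => -(z ^ m.natAbs) / (m.natAbs : ℂ) with hFidef
  set Fo : ℂ → ℤ → ℂ := fun z m => -((z⁻¹) ^ m.natAbs) / (m.natAbs : ℂ) with hFodef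
  set Fν : ℤ → ℂ := fun m =>
    if m < 0 then (Ri.map (fun z => Fi z m)).sum
    else if 0 < m then (Ro.map (fun z => Fo z m)).sum
    else 0 with hFνdef
  have hnormexp : ∀ x : ℝ, ‖Complex.exp ((x : ℂ) * Complex.I)‖ = 1 := by
    intro x
    rw [Complex.norm_exp]
    simp
  -- term-by-term expansion for roots inside the circle
  have hGin : ∀ (θ : ℝ) (z : ℂ), ‖z‖ < 1 →
      HasSum (fun m : ℤ => if m < 0 then Fi z m * Complex.exp (θ * m * Complex.I) else 0)
        (Complex.log (1 - z * Complex.exp (-(θ * Complex.I)))) := by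
    intro θ z hz
    have hu : ‖z * Complex.exp (-((θ : ℂ) * Complex.I))‖ < 1 := by
      rw [norm_mul]
      have : ‖Complex.exp (-((θ : ℂ) * Complex.I))‖ = 1 := by
        have := hnormexp (-θ); push_cast at this
        rw [← this]; congr 1; ring
      rw [this, mul_one]; exact hz
    refine hasSum_int_neg (fun m hm => if_neg hm) (fun k => ?_) (hasSum_log_aux hu)
    rw [if_pos (by omega)]
    have hna : ((-((k : ℤ) + 1))).natAbs = k + 1 := by omega
    rw [hFidef]
    simp only [hna]
    rw [mul_pow, ← Complex.exp_nat_mul]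
    have hA : (θ : ℂ) * ((-((k : ℤ) + 1) : ℤ) : ℂ) * Complex.I
        = ((k + 1 : ℕ) : ℂ) * -((θ : ℂ) * Complex.I) := by push_cast; ring
    rw [hA]
    push_cast
    ring
  -- term-by-term expansion for roots outside the circle
  have hGout : ∀ (θ : ℝ) (z : ℂ), ‖z⁻¹‖ < 1 →
      HasSum (fun m : ℤ => if 0 < m then Fo z m * Complex.exp (θ * m * Complex.I) else 0)
        (Complex.log (1 - z⁻¹ * Complex.exp ((θ : ℂ) * Complex.I))) := by
    intro θ z hz
    have hu : ‖z⁻¹ * Complex.exp ((θ : ℂ) * Complex.I)‖ < 1 := by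
      rw [norm_mul, hnormexp θ, mul_one]; exact hz
    refine hasSum_int_pos (fun m hm => if_neg hm) (fun k => ?_) (hasSum_log_aux hu)
    rw [if_pos (by omega)]
    have hna : (((k : ℤ) + 1)).natAbs = k + 1 := by omega
    rw [hFodef]
    simp only [hna]
    rw [mul_pow, ← Complex.exp_nat_mul]
    have hA : (θ : ℂ) * ((((k : ℤ) + 1) : ℤ) : ℂ) * Complex.I
        = ((k + 1 : ℕ) : ℂ) * ((θ : ℂ) * Complex.I) := by push_cast; ring
    rw [hA]
    push_cast
    ring
  -- the combined series
  set Li : ℝ → ℂ := fun θ =>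
    (Ri.map (fun z => Complex.log (1 - z * Complex.exp (-((θ : ℂ) * Complex.I))))).sum
    with hLidef
  set Lo : ℝ → ℂ := fun θ =>
    (Ro.map (fun z => Complex.log (1 - z⁻¹ * Complex.exp ((θ : ℂ) * Complex.I)))).sum
    with hLodef
  set T : ℝ → ℂ := fun θ => Li θ + Lo θ with hTdef
  have hT : ∀ θ : ℝ, HasSum (fun m : ℤ => Fν m * Complex.exp (θ * m * Complex.I)) (T θ) := by
    intro θ
    have hTi := hasSum_multisetSum Ri
      (fun z m => if m < 0 then Fi z m * Complex.exp (θ * m * Complex.I) else 0) _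
      (fun z hz => hGin θ z (hRimem z hz))
    have hTo := hasSum_multisetSum Ro
      (fun z m => if 0 < m then Fo z m * Complex.exp (θ * m * Complex.I) else 0) _
      (fun z hz => hGout θ z (hRoinv z hz))
    refine (hTi.add hTo).congr_fun (fun m => ?_)
    rcases lt_trichotomy m 0 with hm | hm | hm
    · have e1 : (Ri.map (fun z =>
          if m < 0 then Fi z m * Complex.exp (θ * m * Complex.I) else 0))
          = Ri.map (fun z => Fi z m * Complex.exp (θ * m * Complex.I)) :=
        Multiset.map_congr rfl (fun z _ => if_pos hm)
      have e2 : (Ro.map (fun z =>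
          if 0 < m then Fo z m * Complex.exp (θ * m * Complex.I) else 0))
          = Ro.map (fun _ => (0 : ℂ)) :=
        Multiset.map_congr rfl (fun z _ => if_neg (by omega))
      rw [e1, e2, Multiset.sum_map_mul_right]
      simp [hFνdef, hm]
    · subst hm
      have e1 : (Ri.map (fun z =>
          if (0:ℤ) < 0 then Fi z 0 * Complex.exp (θ * (0:ℤ) * Complex.I) else 0))
          = Ri.map (fun _ => (0 : ℂ)) :=
        Multiset.map_congr rfl (fun z _ => if_neg (by omega))
      have e2 : (Ro.map (fun z =>
          if (0:ℤ) < (0:ℤ) then Fo z 0 * Complex.exp (θ * (0:ℤ) * Complex.I) else 0))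
          = Ro.map (fun _ => (0 : ℂ)) :=
        Multiset.map_congr rfl (fun z _ => if_neg (by omega))
      rw [e1, e2]
      simp [hFνdef]
    · have e1 : (Ri.map (fun z =>
          if m < 0 then Fi z m * Complex.exp (θ * m * Complex.I) else 0))
          = Ri.map (fun _ => (0 : ℂ)) :=
        Multiset.map_congr rfl (fun z _ => if_neg (by omega))
      have e2 : (Ro.map (fun z =>
          if 0 < m then Fo z m * Complex.exp (θ * m * Complex.I) else 0))
          = Ro.map (fun z => Fo z m * Complex.exp (θ * m * Complex.I)) :=
        Multiset.map_congr rfl (fun z _ => if_pos hm)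
      rw [e1, e2, Multiset.sum_map_mul_right]
      simp [hFνdef, hm, not_lt_of_gt hm]
  -- product formula for the characteristic function
  have hEinv : ∀ θ : ℝ, Complex.exp ((θ : ℂ) * Complex.I)
      * Complex.exp (-((θ : ℂ) * Complex.I)) = 1 := by
    intro θ; rw [← Complex.exp_add]; simp
  have hprod : ∀ θ : ℝ, P.eval (Complex.exp ((θ : ℂ) * Complex.I))
      = (a (Fin.last n) : ℂ) * (Ro.map (fun z => -z)).prod
        * Complex.exp ((Multiset.card Ri : ℂ) * ((θ : ℂ) * Complex.I) + T θ) := by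
    intro θ
    conv_lhs => rw [hfact]
    rw [Polynomial.eval_mul, Polynomial.eval_C, hlc, Polynomial.eval_multiset_prod,
      Multiset.map_map, ← hRiRo, Multiset.map_add, Multiset.prod_add]
    have hin : (Ri.map ((Polynomial.eval (Complex.exp ((θ : ℂ) * Complex.I)))
        ∘ (fun z => X - Polynomial.C z))).prod
        = Complex.exp ((Multiset.card Ri : ℂ) * ((θ : ℂ) * Complex.I) + Li θ) := by
      have e1 : Ri.map ((Polynomial.eval (Complex.exp ((θ : ℂ) * Complex.I)))
          ∘ (fun z => X - Polynomial.C z))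
          = Ri.map (fun z => Complex.exp ((θ : ℂ) * Complex.I
              + Complex.log (1 - z * Complex.exp (-((θ : ℂ) * Complex.I))))) := by
        refine Multiset.map_congr rfl (fun z hz => ?_)
        simp only [Function.comp_apply, Polynomial.eval_sub, Polynomial.eval_X,
          Polynomial.eval_C]
        have hu : ‖z * Complex.exp (-((θ : ℂ) * Complex.I))‖ < 1 := by
          rw [norm_mul]
          have hh : ‖Complex.exp (-((θ : ℂ) * Complex.I))‖ = 1 := by
            have := hnormexp (-θ); push_cast at this
            rw [← this]; congr 1; ring
          rw [hh, mul_one]; exact hRimem z hz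
        have hne : (1 : ℂ) - z * Complex.exp (-((θ : ℂ) * Complex.I)) ≠ 0 := by
          intro h; rw [sub_eq_zero] at h; rw [← h] at hu; simp at hu
        rw [Complex.exp_add, Complex.exp_log hne]
        symm
        calc Complex.exp ((θ : ℂ) * Complex.I)
            * (1 - z * Complex.exp (-((θ : ℂ) * Complex.I)))
            = Complex.exp ((θ : ℂ) * Complex.I)
              - z * (Complex.exp ((θ : ℂ) * Complex.I)
                * Complex.exp (-((θ : ℂ) * Complex.I))) := by ring
          _ = Complex.exp ((θ : ℂ) * Complex.I) - z := by rw [hEinv θ, mul_one]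
      have e2 : (Ri.map (fun z => Complex.exp ((θ : ℂ) * Complex.I
            + Complex.log (1 - z * Complex.exp (-((θ : ℂ) * Complex.I))))))
          = (Ri.map (fun z => (θ : ℂ) * Complex.I
            + Complex.log (1 - z * Complex.exp (-((θ : ℂ) * Complex.I))))).map Complex.exp := by
        rw [Multiset.map_map]
        rfl
      rw [e1, e2, ← Complex.exp_multiset_sum]
      congr 1
      rw [Multiset.sum_map_add, hLidef]
      congr 1
      rw [Multiset.map_const', Multiset.sum_replicate, nsmul_eq_mul]
    have hout : (Ro.map ((Polynomial.eval (Complex.exp ((θ : ℂ) * Complex.I)))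
        ∘ (fun z => X - Polynomial.C z))).prod
        = (Ro.map (fun z => -z)).prod * Complex.exp (Lo θ) := by
      have e1 : Ro.map ((Polynomial.eval (Complex.exp ((θ : ℂ) * Complex.I)))
          ∘ (fun z => X - Polynomial.C z))
          = Ro.map (fun z => (-z) * Complex.exp (Complex.log
              (1 - z⁻¹ * Complex.exp ((θ : ℂ) * Complex.I)))) := by
        refine Multiset.map_congr rfl (fun z hz => ?_)
        simp only [Function.comp_apply, Polynomial.eval_sub, Polynomial.eval_X,
          Polynomial.eval_C]
        have hu : ‖z⁻¹ * Complex.exp ((θ : ℂ) * Complex.I)‖ < 1 := by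
          rw [norm_mul, hnormexp θ, mul_one]; exact hRoinv z hz
        have hne : (1 : ℂ) - z⁻¹ * Complex.exp ((θ : ℂ) * Complex.I) ≠ 0 := by
          intro h; rw [sub_eq_zero] at h; rw [← h] at hu; simp at hu
        rw [Complex.exp_log hne]
        have hz0 : z ≠ 0 := hRone z hz
        field_simp
        ring
      rw [e1, Multiset.prod_map_mul]
      congr 1
      have e2 : (Ro.map (fun z => Complex.exp (Complex.log
            (1 - z⁻¹ * Complex.exp ((θ : ℂ) * Complex.I)))))
          = (Ro.map (fun z => Complex.log
            (1 - z⁻¹ * Complex.exp ((θ : ℂ) * Complex.I)))).map Complex.exp := by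
        rw [Multiset.map_map]
        rfl
      rw [e2, ← Complex.exp_multiset_sum]
    rw [hin, hout]
    simp only [hTdef]
    rw [show (Multiset.card Ri : ℂ) * ((θ : ℂ) * Complex.I) + (Li θ + Lo θ)
        = ((Multiset.card Ri : ℂ) * ((θ : ℂ) * Complex.I) + Li θ) + Lo θ from by ring,
      Complex.exp_add, Complex.exp_add, Complex.exp_add]
    ring
  -- conjugation symmetry of the roots
  have hconjroots : P.roots.map (starRingEnd ℂ) = P.roots := by
    have hmap : P.map (starRingEnd ℂ) = P := by
      rw [hPdef]
      rw [Polynomial.map_sum]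
      refine Finset.sum_congr rfl (fun j _ => ?_)
      rw [Polynomial.map_mul, Polynomial.map_pow, Polynomial.map_C, Polynomial.map_X,
        Complex.conj_ofReal]
    conv_rhs => rw [← hmap]
    exact (hsplits.roots_map (starRingEnd ℂ)).symm
  have hRiconj : Ri.map (starRingEnd ℂ) = Ri := by
    have einst : Ri = Multiset.filter (fun z : ℂ => ‖z‖ < 1) P.roots :=
      Multiset.filter_congr (fun _ _ => Iff.rfl)
    have e2 : Multiset.filter ((fun z : ℂ => ‖z‖ < 1) ∘ (starRingEnd ℂ)) P.roots
        = Multiset.filter (fun z : ℂ => ‖z‖ < 1) P.roots :=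
      Multiset.filter_congr (fun x _ => by simp)
    have e1 := Multiset.filter_map (p := fun z : ℂ => ‖z‖ < 1)
      (starRingEnd ℂ) P.roots
    rw [hconjroots, e2] at e1
    conv_lhs => rw [einst]
    rw [← e1]
  have hRoconj : Ro.map (starRingEnd ℂ) = Ro := by
    have einst : Ro = Multiset.filter (fun z : ℂ => ¬ ‖z‖ < 1) P.roots :=
      Multiset.filter_congr (fun _ _ => Iff.rfl)
    have e2 : Multiset.filter ((fun z : ℂ => ¬ ‖z‖ < 1) ∘ (starRingEnd ℂ)) P.roots
        = Multiset.filter (fun z : ℂ => ¬ ‖z‖ < 1) P.roots :=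
      Multiset.filter_congr (fun x _ => by simp)
    have e1 := Multiset.filter_map (p := fun z : ℂ => ¬ ‖z‖ < 1)
      (starRingEnd ℂ) P.roots
    rw [hconjroots, e2] at e1
    conv_lhs => rw [einst]
    rw [← e1]
  have hFνreal : ∀ m : ℤ, (((Fν m).re : ℝ) : ℂ) = Fν m := by
    intro m
    rw [← Complex.conj_eq_iff_re]
    rcases lt_trichotomy m 0 with hm | hm | hm
    · rw [hFνdef]
      simp only [if_pos hm]
      rw [map_multiset_sum, Multiset.map_map]
      have e1 : Ri.map ((starRingEnd ℂ) ∘ (fun z => Fi z m))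
          = (Ri.map (starRingEnd ℂ)).map (fun z => Fi z m) := by
        rw [Multiset.map_map]
        refine Multiset.map_congr rfl (fun z _ => ?_)
        rw [hFidef]
        simp only [Function.comp_apply]
        rw [map_div₀, map_neg, map_pow, map_natCast]
      rw [e1, hRiconj]
    · subst hm; simp [hFνdef]
    · rw [hFνdef]
      simp only [if_neg (by omega : ¬ m < 0), if_pos hm]
      rw [map_multiset_sum, Multiset.map_map]
      have e1 : Ro.map ((starRingEnd ℂ) ∘ (fun z => Fo z m))
          = (Ro.map (starRingEnd ℂ)).map (fun z => Fo z m) := by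
        rw [Multiset.map_map]
        refine Multiset.map_congr rfl (fun z _ => ?_)
        rw [hFodef]
        simp only [Function.comp_apply]
        rw [map_div₀, map_neg, map_pow, map_natCast, map_inv₀]
      rw [e1, hRoconj]
  -- normalization at θ = 0
  have hCval : (a (Fin.last n) : ℂ) * (Ro.map (fun z => -z)).prod * Complex.exp (T 0) = 1 := by
    have h0 := heval 0
    have h1 := hprod 0
    have h2 : ∑ j, (a j : ℂ) * Complex.exp (((0 : ℝ) : ℂ) * ((j : ℕ) : ℂ) * Complex.I)
        = 1 := by
      have h3 : ∑ j, (a j : ℂ) = 1 := by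
        rw [← Complex.ofReal_sum]
        exact_mod_cast congrArg (fun x : ℝ => (x : ℂ)) hsum
      simpa using h3
    rw [h2, h1] at h0
    simp only [Complex.ofReal_zero, zero_mul, mul_zero, zero_add] at h0
    exact h0.symm
  refine ⟨Multiset.card Ri, fun m => (Fν m).re, ?_, ?_, ?_, ?_, ?_⟩
  · calc Multiset.card Ri ≤ Multiset.card P.roots :=
        Multiset.card_le_card (Multiset.filter_le _ _)
      _ = n := hcard
  · simp [hFνdef]
  · -- summability of |ν|
    show Summable (fun m : ℤ => |(Fν m).re|)
    have hSi : ∀ z : ℂ, ‖z‖ < 1 →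
        Summable (fun m : ℤ => if m < 0 then ‖z‖ ^ m.natAbs else 0) := by
      intro z hz
      have hg : Summable (fun k : ℕ => ‖z‖ ^ (k + 1)) := by
        have h1 := (summable_geometric_of_lt_one (norm_nonneg z) hz).mul_right ‖z‖
        refine h1.congr (fun k => ?_)
        rw [pow_succ]
      refine (hasSum_int_neg (fun m hm => if_neg hm) (fun k => ?_) hg.hasSum).summable
      rw [if_pos (by omega : (-((k : ℤ) + 1)) < 0),
        show ((-((k : ℤ) + 1))).natAbs = k + 1 from by omega]
    have hSo : ∀ z : ℂ, ‖z⁻¹‖ < 1 →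
        Summable (fun m : ℤ => if 0 < m then ‖z⁻¹‖ ^ m.natAbs else 0) := by
      intro z hz
      have hg : Summable (fun k : ℕ => ‖z⁻¹‖ ^ (k + 1)) := by
        have h1 := (summable_geometric_of_lt_one (norm_nonneg z⁻¹) hz).mul_right ‖z⁻¹‖
        refine h1.congr (fun k => ?_)
        rw [pow_succ]
      refine (hasSum_int_pos (fun m hm => if_neg hm) (fun k => ?_) hg.hasSum).summable
      rw [if_pos (by omega : (0 : ℤ) < (k : ℤ) + 1),
        show (((k : ℤ) + 1)).natAbs = k + 1 from by omega]
    have hBi : Summable (fun m : ℤ =>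
        (Ri.map (fun z => if m < 0 then ‖z‖ ^ m.natAbs else 0)).sum) :=
      (hasSum_multisetSum Ri (fun z m => if m < 0 then ‖z‖ ^ m.natAbs else 0) _
        (fun z hz => (hSi z (hRimem z hz)).hasSum)).summable
    have hBo : Summable (fun m : ℤ =>
        (Ro.map (fun z => if 0 < m then ‖z⁻¹‖ ^ m.natAbs else 0)).sum) :=
      (hasSum_multisetSum Ro (fun z m => if 0 < m then ‖z⁻¹‖ ^ m.natAbs else 0) _
        (fun z hz => (hSo z (hRoinv z hz)).hasSum)).summable
    refine Summable.of_nonneg_of_le (fun m => abs_nonneg _) (fun m => ?_) (hBi.add hBo)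
    have hRonneg : (0 : ℝ) ≤ (Ro.map (fun z => if 0 < m then ‖z⁻¹‖ ^ m.natAbs else 0)).sum :=
      Multiset.sum_nonneg (fun x hx => by
        obtain ⟨z, _, rfl⟩ := Multiset.mem_map.1 hx
        positivity)
    have hRinneg : (0 : ℝ) ≤ (Ri.map (fun z => if m < 0 then ‖z‖ ^ m.natAbs else 0)).sum :=
      Multiset.sum_nonneg (fun x hx => by
        obtain ⟨z, _, rfl⟩ := Multiset.mem_map.1 hx
        positivity)
    rcases lt_trichotomy m 0 with hm | hm | hm
    · have h1 : |(Fν m).re| ≤ ‖Fν m‖ := Complex.abs_re_le_norm _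
      refine h1.trans ?_
      have h2 : Fν m = (Ri.map (fun z => Fi z m)).sum := by
        simp only [hFνdef]
        rw [if_pos hm]
      rw [h2]
      have h3 : ‖(Ri.map (fun z => Fi z m)).sum‖
          ≤ (Ri.map (fun z => ‖Fi z m‖)).sum := by
        refine (norm_multiset_sum_le _).trans ?_
        rw [Multiset.map_map]
        exact le_of_eq rfl
      refine h3.trans ?_
      refine le_add_of_le_of_nonneg ?_ hRonneg
      refine multiset_sum_map_le (fun z hz => ?_)
      rw [if_pos hm, hFidef]
      have h4 : ‖-z ^ m.natAbs / ((m.natAbs : ℕ) : ℂ)‖ = ‖z‖ ^ m.natAbs / (m.natAbs : ℝ) := by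
        rw [norm_div, norm_neg, norm_pow]
        congr 1
        simp
      rw [h4]
      refine div_le_self (pow_nonneg (norm_nonneg z) _) ?_
      exact_mod_cast Nat.one_le_iff_ne_zero.2 (by omega)
    · subst hm
      have h0 : Fν 0 = 0 := by simp [hFνdef]
      rw [h0]
      simp only [Complex.zero_re, abs_zero]
      exact add_nonneg hRinneg hRonneg
    · have h1 : |(Fν m).re| ≤ ‖Fν m‖ := Complex.abs_re_le_norm _
      refine h1.trans ?_
      have h2 : Fν m = (Ro.map (fun z => Fo z m)).sum := by
        simp only [hFνdef]
        rw [if_neg (by omega : ¬ m < 0), if_pos hm]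
      rw [h2]
      have h3 : ‖(Ro.map (fun z => Fo z m)).sum‖
          ≤ (Ro.map (fun z => ‖Fo z m‖)).sum := by
        refine (norm_multiset_sum_le _).trans ?_
        rw [Multiset.map_map]
        exact le_of_eq rfl
      refine h3.trans ?_
      refine le_add_of_nonneg_of_le hRinneg ?_
      refine multiset_sum_map_le (fun z hz => ?_)
      rw [if_pos hm, hFodef]
      have h4 : ‖-(z⁻¹) ^ m.natAbs / ((m.natAbs : ℕ) : ℂ)‖
          = ‖z⁻¹‖ ^ m.natAbs / (m.natAbs : ℝ) := by
        rw [norm_div, norm_neg, norm_pow]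
        congr 1
        simp
      rw [h4]
      refine div_le_self (pow_nonneg (norm_nonneg _) _) ?_
      exact_mod_cast Nat.one_le_iff_ne_zero.2 (by omega)
  · intro θ
    have h0' : HasSum (fun m : ℤ => Fν m) (T 0) := by
      refine (hT 0).congr_fun (fun m => ?_)
      simp
    have hsub := (hT θ).sub h0'
    have htsum : ∑' m : ℤ, (Complex.exp (θ * m * Complex.I) - 1) * (((Fν m).re : ℝ) : ℂ)
        = T θ - T 0 := by
      refine HasSum.tsum_eq (hsub.congr_fun (fun m => ?_))
      rw [hFνreal m]; ring
    rw [heval θ, hprod θ, htsum]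
    have hC0 : (a (Fin.last n) : ℂ) * (Ro.map (fun z => -z)).prod
        = Complex.exp (-(T 0)) := by
      rw [Complex.exp_neg]
      exact eq_inv_of_mul_eq_one_left hCval
    rw [hC0, ← Complex.exp_add]
    congr 1
    push_cast
    ring
  · rfl
end

section
/- Let ξ₁,...,ξ_n be the roots (with multiplicity) of the polynomial f(w) = Σ_{j=0}^n a_j w^j with real coefficients a_0,...,a_{n-1} ≥ 0, a_n > 0, Σa_j = 1, and suppose no root lies on the unit circle. Then the signed measure ν = −Σ_{m≥1} m^{-1}(Σ_{j: |ξ_j|<1} ξ_j^m) δ_{−m} − Σ_{m≥1} m^{-1}(Σ_{j: |ξ_j|>1} ξ_j^{−m}) δ_m is a real-valued finite signed measure on ℤ \ {0}, and for all θ ∈ ℝ, f(e^{iθ}) = exp(iθγ + ∫(e^{iθx} − 1) dν(x)), where γ is the number of roots with modulus less than 1. -/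
open Complex

/-- The quasi-Lévy measure on `ℤ ∖ {0}` built from the roots `ξ₁,…,ξ_n` of the polynomial:
`ν(−m) = −m⁻¹ ∑_{j : |ξ_j|<1} ξ_j^m` and `ν(m) = −m⁻¹ ∑_{j : |ξ_j|>1} ξ_j^{−m}` for `m ≥ 1`,
and `ν(0) = 0` (a priori complex-valued). -/
noncomputable def quasiLevyOfRoots (n : ℕ) (ξ : Fin n → ℂ) : ℤ → ℂ := fun m =>
  if m = 0 then 0
  else if m < 0 then
    -(((-m : ℤ) : ℂ))⁻¹ * ∑ j : Fin n, if ‖ξ j‖ < 1 then ξ j ^ (-m).toNat else 0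
  else
    -(((m : ℤ) : ℂ))⁻¹ * ∑ j : Fin n, if 1 < ‖ξ j‖ then (ξ j)⁻¹ ^ m.toNat else 0

lemma hasSum_log_shift {z : ℂ} (hz : ‖z‖ < 1) :
    HasSum (fun k : ℕ => z ^ (k + 1) / ((k + 1 : ℕ) : ℂ)) (-Complex.log (1 - z)) := by
  have h := Complex.hasSum_taylorSeries_neg_log (z := z)
    (by simpa using hz)
  have h2 := (hasSum_nat_add_iff' (f := fun n : ℕ => z ^ n / (n : ℂ)) 1).mpr h
  simpa using h2

lemma hasSum_inside {z : ℂ} (hz : ‖z‖ < 1) (θ : ℝ) :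
    HasSum (fun m : ℤ => if m < 0 then
        (Complex.exp (θ * m * Complex.I) - 1) * (-(((-m : ℤ) : ℂ))⁻¹ * z ^ (-m).toNat)
      else 0)
      (-Complex.log (1 - z) + Complex.log (1 - z * Complex.exp (-(θ * Complex.I)))) := by
  set u := Complex.exp (-(θ * Complex.I)) with hu_def
  have hu : ‖u‖ = 1 := by
    simp [hu_def, Complex.norm_exp]
  have hzu : ‖z * u‖ < 1 := by
    rw [norm_mul, hu, mul_one]; exact hz
  have hA := hasSum_log_shift hz
  have hB := hasSum_log_shift hzu
  have hC := hA.sub hB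
  obtain ⟨g, hg⟩ : ∃ g : ℤ → ℂ, g = (fun m : ℤ => if m < 0 then
        (Complex.exp (θ * m * Complex.I) - 1) * (-(((-m : ℤ) : ℂ))⁻¹ * z ^ (-m).toNat)
      else 0) := ⟨_, rfl⟩
  rw [← hg]
  have h2 : HasSum (fun k : ℕ => g (-(k + 1)))
      (-Complex.log (1 - z) - -Complex.log (1 - z * u)) := by
    refine hC.congr_fun fun k => ?_
    simp only [hg]
    have hlt : (-(k + 1) : ℤ) < 0 := by omega
    rw [if_pos hlt]
    have h1 : ((-(-(k + 1) : ℤ)).toNat) = k + 1 := by omega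
    have h2 : (((-(-(k + 1) : ℤ)) : ℤ) : ℂ) = ((k + 1 : ℕ) : ℂ) := by push_cast; ring
    rw [h1, h2]
    have hexp : Complex.exp (θ * ((-(k + 1) : ℤ) : ℂ) * Complex.I) = u ^ (k + 1) := by
      rw [show ((θ : ℂ) * ((-(k + 1) : ℤ) : ℂ) * Complex.I)
          = ((k + 1 : ℕ) : ℂ) * (-(θ * Complex.I)) by push_cast; ring,
        Complex.exp_nat_mul]
    rw [hexp, div_eq_mul_inv, div_eq_mul_inv, mul_pow]
    ring
  have h1 : HasSum (fun k : ℕ => g (k : ℤ)) 0 := by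
    refine hasSum_zero.congr_fun fun k => ?_
    simp only [hg]
    rw [if_neg (by omega)]
  have h3 := h1.of_nat_of_neg_add_one h2
  rw [zero_add, sub_neg_eq_add] at h3
  exact h3

lemma hasSum_outside {z : ℂ} (hz : 1 < ‖z‖) (θ : ℝ) :
    HasSum (fun m : ℤ => if 0 < m then
        (Complex.exp (θ * m * Complex.I) - 1) * (-(((m : ℤ) : ℂ))⁻¹ * z⁻¹ ^ m.toNat)
      else 0)
      (-Complex.log (1 - z⁻¹) + Complex.log (1 - z⁻¹ * Complex.exp (θ * Complex.I))) := by
  set u := Complex.exp (θ * Complex.I) with hu_def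
  have hu : ‖u‖ = 1 := by simp [hu_def, Complex.norm_exp]
  have hz' : ‖z⁻¹‖ < 1 := by
    rw [norm_inv]
    exact inv_lt_one_of_one_lt₀ hz
  have hzu : ‖z⁻¹ * u‖ < 1 := by rw [norm_mul, hu, mul_one]; exact hz'
  have hA := Complex.hasSum_taylorSeries_neg_log (z := z⁻¹)
    (by simpa using hz')
  have hB := Complex.hasSum_taylorSeries_neg_log (z := z⁻¹ * u)
    (by simpa using hzu)
  have hC := hA.sub hB
  obtain ⟨g, hg⟩ : ∃ g : ℤ → ℂ, g = (fun m : ℤ => if 0 < m then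
        (Complex.exp (θ * m * Complex.I) - 1) * (-(((m : ℤ) : ℂ))⁻¹ * z⁻¹ ^ m.toNat)
      else 0) := ⟨_, rfl⟩
  rw [← hg]
  have h1 : HasSum (fun k : ℕ => g (k : ℤ))
      (-Complex.log (1 - z⁻¹) - -Complex.log (1 - z⁻¹ * u)) := by
    refine hC.congr_fun fun k => ?_
    simp only [hg]
    rcases Nat.eq_zero_or_pos k with hk | hk
    · subst hk; simp
    · rw [if_pos (by exact_mod_cast hk)]
      have h1 : ((k : ℤ)).toNat = k := by omega
      have h2 : (((k : ℤ)) : ℂ) = ((k : ℕ) : ℂ) := by norm_cast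
      rw [h1, h2]
      have hexp : Complex.exp (θ * ((k : ℕ) : ℂ) * Complex.I) = u ^ k := by
        rw [show ((θ : ℂ) * ((k : ℕ) : ℂ) * Complex.I) = ((k : ℕ) : ℂ) * (θ * Complex.I)
          by ring, Complex.exp_nat_mul]
      rw [hexp, div_eq_mul_inv, div_eq_mul_inv, mul_pow]
      ring
  have h2 : HasSum (fun k : ℕ => g (-(k + 1))) 0 := by
    refine hasSum_zero.congr_fun fun k => ?_
    simp only [hg]
    rw [if_neg (by omega)]
  have h3 := h1.of_nat_of_neg_add_one h2
  rw [add_zero, sub_neg_eq_add] at h3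
  exact h3

/-- Let `ξ₁,…,ξ_n` be the roots (with multiplicity) of `f(w) = ∑_{j=0}^n a_j w^j` with real
coefficients `a_0,…,a_{n-1} ≥ 0`, `a_n > 0`, `∑ a_j = 1`, none of them on the unit circle.
Then the quasi-Lévy measure built from the roots is a real-valued finite signed measure on
`ℤ ∖ {0}`, and `f(e^{iθ}) = exp(iθγ + ∑_m (e^{iθm} − 1) ν(m))` where `γ` is the number of
roots with modulus less than `1`. -/
theorem quasiLevy_of_roots_representation (n : ℕ) (a : Fin (n + 1) → ℝ)
    (ha : ∀ j : Fin (n + 1), (j : ℕ) < n → 0 ≤ a j) (han : 0 < a (Fin.last n))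
    (hsum : ∑ j, a j = 1) (ξ : Fin n → ℂ)
    (hfact : ∀ w : ℂ, ∑ j, (a j : ℂ) * w ^ (j : ℕ) =
      (a (Fin.last n) : ℂ) * ∏ j : Fin n, (w - ξ j))
    (hcirc : ∀ j, ‖ξ j‖ ≠ 1) :
    (∀ m : ℤ, (quasiLevyOfRoots n ξ m).im = 0) ∧
    Summable (fun m : ℤ => ‖quasiLevyOfRoots n ξ m‖) ∧
    (∀ θ : ℝ,
      ∑ j, (a j : ℂ) * Complex.exp (θ * (j : ℕ) * Complex.I) =
        Complex.exp (Complex.I * θ *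
            ((@Finset.filter (Fin n) (fun j => ‖ξ j‖ < 1) (Classical.decPred _)
              Finset.univ).card : ℕ) +
          ∑' m : ℤ, (Complex.exp (θ * (m : ℤ) * Complex.I) - 1) * quasiLevyOfRoots n ξ m)) := by
  have hanne : ((a (Fin.last n) : ℂ)) ≠ 0 := by
    exact_mod_cast ne_of_gt han
  -- conjugation invariance of the product
  have hprod : ∀ w : ℂ, ∏ j : Fin n, (w - ξ j) = ∏ j : Fin n, (w - (starRingEnd ℂ) (ξ j)) := by
    intro w
    apply mul_left_cancel₀ hanne
    rw [← hfact w]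
    have h1 := congrArg (starRingEnd ℂ) (hfact ((starRingEnd ℂ) w))
    simpa [map_sum, map_mul, map_pow, map_prod, Complex.conj_ofReal, Complex.conj_conj]
      using h1
  -- multiset equality under conjugation
  have hms : Multiset.map ξ Finset.univ.val
      = Multiset.map (fun j => (starRingEnd ℂ) (ξ j)) Finset.univ.val := by
    have hP : ((Multiset.map ξ Finset.univ.val).map fun z => Polynomial.X - Polynomial.C z).prod
        = ((Multiset.map (fun j => (starRingEnd ℂ) (ξ j)) Finset.univ.val).map
            fun z => Polynomial.X - Polynomial.C z).prod := by
      apply Polynomial.funext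
      intro w
      simp only [Polynomial.eval_multiset_prod, Multiset.map_map, Function.comp,
        Polynomial.eval_sub, Polynomial.eval_X, Polynomial.eval_C]
      simpa [Finset.prod_eq_multiset_prod] using hprod w
    have := congrArg Polynomial.roots hP
    rwa [Polynomial.roots_multiset_prod_X_sub_C, Polynomial.roots_multiset_prod_X_sub_C] at this
  have hsum_conj : ∀ g : ℂ → ℂ, (∀ z, g ((starRingEnd ℂ) z) = (starRingEnd ℂ) (g z)) →
      (starRingEnd ℂ) (∑ j, g (ξ j)) = ∑ j, g (ξ j) := by
    intro g hg
    rw [map_sum]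
    calc ∑ j, (starRingEnd ℂ) (g (ξ j)) = ∑ j, g ((starRingEnd ℂ) (ξ j)) := by
          simp only [hg]
      _ = ((Multiset.map (fun j => (starRingEnd ℂ) (ξ j)) Finset.univ.val).map g).sum := by
          rw [Finset.sum_eq_multiset_sum, Multiset.map_map]; rfl
      _ = ((Multiset.map ξ Finset.univ.val).map g).sum := by rw [← hms]
      _ = ∑ j, g (ξ j) := by rw [Multiset.map_map, ← Finset.sum_eq_multiset_sum]; rfl
  -- Part 1 : realness
  have part1 : ∀ m : ℤ, (quasiLevyOfRoots n ξ m).im = 0 := by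
    intro m
    unfold quasiLevyOfRoots
    split_ifs with h0 hneg
    · rfl
    · have hS : ((∑ j : Fin n, if ‖ξ j‖ < 1 then ξ j ^ (-m).toNat else 0) : ℂ).im
          = 0 := by
        rw [← Complex.conj_eq_iff_im]
        exact hsum_conj (fun z => if ‖z‖ < 1 then z ^ (-m).toNat else 0)
          (fun z => by simp only [apply_ite (starRingEnd ℂ), map_pow, map_zero,
            Complex.norm_conj])
      have him : (-(((-m : ℤ) : ℂ))⁻¹).im = 0 := by simp [Complex.inv_im]
      rw [Complex.mul_im, hS, him]; ring
    · have hS : ((∑ j : Fin n, if 1 < ‖ξ j‖ then (ξ j)⁻¹ ^ m.toNat else 0) : ℂ).im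
          = 0 := by
        rw [← Complex.conj_eq_iff_im]
        exact hsum_conj (fun z => if 1 < ‖z‖ then z⁻¹ ^ m.toNat else 0)
          (fun z => by simp only [apply_ite (starRingEnd ℂ), map_pow, map_inv₀, map_zero,
            Complex.norm_conj])
      have him : (-(((m : ℤ) : ℂ))⁻¹).im = 0 := by simp [Complex.inv_im]
      rw [Complex.mul_im, hS, him]; ring
  -- the geometric majorant
  set c : Fin n → ℝ := fun j => min (‖ξ j‖) (‖ξ j‖)⁻¹ with hc_def
  have hc0 : ∀ j, 0 ≤ c j := fun j =>
    le_min (norm_nonneg _) (inv_nonneg.mpr (norm_nonneg _))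
  have hc1 : ∀ j, c j < 1 := by
    intro j
    rcases lt_or_gt_of_ne (hcirc j) with h | h
    · exact lt_of_le_of_lt (min_le_left _ _) h
    · exact lt_of_le_of_lt (min_le_right _ _) (inv_lt_one_of_one_lt₀ h)
  have hceq1 : ∀ j, ‖ξ j‖ < 1 → c j = ‖ξ j‖ := by
    intro j h
    rcases eq_or_lt_of_le (norm_nonneg (ξ j)) with h0 | h0
    · rw [hc_def]; simp [← h0]
    · exact min_eq_left (le_of_lt (lt_trans h ((one_lt_inv₀ h0).mpr h)))
  have hceq2 : ∀ j, 1 < ‖ξ j‖ → c j = (‖ξ j‖)⁻¹ := by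
    intro j h
    exact min_eq_right (le_of_lt (lt_trans (inv_lt_one_of_one_lt₀ h) h))
  have hbound : ∀ m : ℤ, ‖quasiLevyOfRoots n ξ m‖ ≤ ∑ j, c j ^ m.natAbs := by
    intro m
    unfold quasiLevyOfRoots
    split_ifs with h0 hneg
    · simp only [norm_zero]
      exact Finset.sum_nonneg fun j _ => pow_nonneg (hc0 j) _
    · rw [norm_mul]
      have hscal : ‖-(((-m : ℤ) : ℂ))⁻¹‖ ≤ 1 := by
        rw [norm_neg, norm_inv, Complex.norm_intCast]
        apply inv_le_one_of_one_le₀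
        rw [← Int.cast_abs]
        exact_mod_cast Int.one_le_abs (by omega : (-m) ≠ 0)
      calc ‖-(((-m : ℤ) : ℂ))⁻¹‖ *
            ‖∑ j : Fin n, if ‖ξ j‖ < 1 then ξ j ^ (-m).toNat else 0‖
          ≤ 1 * ‖∑ j : Fin n, if ‖ξ j‖ < 1 then ξ j ^ (-m).toNat else 0‖
            := mul_le_mul_of_nonneg_right hscal (norm_nonneg _)
        _ = ‖∑ j : Fin n, if ‖ξ j‖ < 1 then ξ j ^ (-m).toNat else 0‖ :=
            one_mul _
        _ ≤ ∑ j : Fin n,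
              ‖if ‖ξ j‖ < 1 then ξ j ^ (-m).toNat else 0‖ :=
            norm_sum_le _ _
        _ ≤ ∑ j, c j ^ m.natAbs := by
            apply Finset.sum_le_sum
            intro j _
            have hmn : (-m).toNat = m.natAbs := by omega
            split_ifs with hj
            · rw [norm_pow, hmn, hceq1 j hj]
            · rw [norm_zero]
              exact pow_nonneg (hc0 j) _
    · rw [norm_mul]
      have hscal : ‖-(((m : ℤ) : ℂ))⁻¹‖ ≤ 1 := by
        rw [norm_neg, norm_inv, Complex.norm_intCast]
        apply inv_le_one_of_one_le₀
        rw [← Int.cast_abs]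
        exact_mod_cast Int.one_le_abs (by omega : m ≠ 0)
      calc ‖-(((m : ℤ) : ℂ))⁻¹‖ *
            ‖∑ j : Fin n, if 1 < ‖ξ j‖ then (ξ j)⁻¹ ^ m.toNat else 0‖
          ≤ 1 * ‖∑ j : Fin n, if 1 < ‖ξ j‖ then (ξ j)⁻¹ ^ m.toNat else 0‖
            := mul_le_mul_of_nonneg_right hscal (norm_nonneg _)
        _ = ‖∑ j : Fin n, if 1 < ‖ξ j‖ then (ξ j)⁻¹ ^ m.toNat else 0‖ :=
            one_mul _
        _ ≤ ∑ j : Fin n,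
              ‖if 1 < ‖ξ j‖ then (ξ j)⁻¹ ^ m.toNat else 0‖ :=
            norm_sum_le _ _
        _ ≤ ∑ j, c j ^ m.natAbs := by
            apply Finset.sum_le_sum
            intro j _
            have hmn : m.toNat = m.natAbs := by omega
            split_ifs with hj
            · rw [norm_pow, norm_inv, hmn, hceq2 j hj]
            · rw [norm_zero]
              exact pow_nonneg (hc0 j) _
  have hgeo : Summable (fun m : ℤ => ∑ j, c j ^ m.natAbs) := by
    apply summable_sum
    intro j _
    apply Summable.of_nat_of_neg_add_one
    · exact (summable_geometric_of_lt_one (hc0 j) (hc1 j)).congr (fun k => by simp)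
    · refine ((summable_geometric_of_lt_one (hc0 j) (hc1 j)).mul_right (c j)).congr fun k => ?_
      have : ((-(k + 1) : ℤ)).natAbs = k + 1 := by omega
      rw [this, pow_succ]
  have part2 : Summable (fun m : ℤ => ‖quasiLevyOfRoots n ξ m‖) :=
    Summable.of_nonneg_of_le (fun m => norm_nonneg _) hbound hgeo
  refine ⟨part1, part2, ?_⟩
  intro θ
  have hE0 : Complex.exp ((θ:ℂ) * Complex.I) ≠ 0 := Complex.exp_ne_zero _
  have h1ξ : ∀ j : Fin n, (1:ℂ) - ξ j ≠ 0 := by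
    intro j h
    rw [sub_eq_zero] at h
    exact hcirc j (by rw [← h]; simp)
  -- per-root series and exponential identity
  have key : ∀ j : Fin n, ∃ L : ℂ,
      HasSum (fun m : ℤ =>
        if m < 0 then (Complex.exp (θ * m * Complex.I) - 1) *
            (-(((-m : ℤ) : ℂ))⁻¹ * (if ‖ξ j‖ < 1 then ξ j ^ (-m).toNat else 0))
        else if 0 < m then (Complex.exp (θ * m * Complex.I) - 1) *
            (-(((m : ℤ) : ℂ))⁻¹ * (if 1 < ‖ξ j‖ then (ξ j)⁻¹ ^ m.toNat else 0))
        else 0) L ∧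
      Complex.exp ((if ‖ξ j‖ < 1 then (Complex.I * (θ:ℂ)) else 0) + L)
        = (Complex.exp ((θ:ℂ) * Complex.I) - ξ j) / (1 - ξ j) := by
    intro j
    rcases lt_or_gt_of_ne (hcirc j) with hlt | hgt
    · refine ⟨-Complex.log (1 - ξ j) +
          Complex.log (1 - ξ j * Complex.exp (-((θ:ℂ) * Complex.I))), ?_, ?_⟩
      · refine (hasSum_inside hlt θ).congr_fun fun m => ?_
        rcases lt_trichotomy m 0 with hm | hm | hm
        · rw [if_pos hm, if_pos hm, if_pos hlt]
        · subst hm; norm_num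
        · rw [if_neg (by omega : ¬ m < 0), if_neg (by omega : ¬ m < 0), if_pos hm,
            if_neg (asymm hlt), mul_zero, mul_zero]
      · rw [if_pos hlt]
        have habs : ‖ξ j * Complex.exp (-((θ:ℂ) * Complex.I))‖
            = ‖ξ j‖ := by
          rw [norm_mul, Complex.norm_exp]
          simp
        have h2 : (1 : ℂ) - ξ j * Complex.exp (-((θ:ℂ) * Complex.I)) ≠ 0 := by
          intro h
          rw [sub_eq_zero] at h
          rw [← h, norm_one] at habs
          exact hcirc j habs.symm
        rw [Complex.exp_add, Complex.exp_add,
          Complex.exp_neg (Complex.log (1 - ξ j)), Complex.exp_log (h1ξ j),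
          Complex.exp_log h2, Complex.exp_neg ((θ:ℂ) * Complex.I),
          mul_comm Complex.I (θ:ℂ)]
        have e3 : (1:ℂ) - ξ j * (Complex.exp ((θ:ℂ) * Complex.I))⁻¹
            = (Complex.exp ((θ:ℂ) * Complex.I))⁻¹ * (Complex.exp ((θ:ℂ) * Complex.I) - ξ j) := by
          field_simp
        rw [e3, div_eq_mul_inv,
          show Complex.exp ((θ:ℂ) * Complex.I) * ((1 - ξ j)⁻¹ *
              ((Complex.exp ((θ:ℂ) * Complex.I))⁻¹ * (Complex.exp ((θ:ℂ) * Complex.I) - ξ j)))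
            = (Complex.exp ((θ:ℂ) * Complex.I) * (Complex.exp ((θ:ℂ) * Complex.I))⁻¹) *
              ((Complex.exp ((θ:ℂ) * Complex.I) - ξ j) * (1 - ξ j)⁻¹) from by ring,
          mul_inv_cancel₀ hE0, one_mul]
    · have hξ0 : ξ j ≠ 0 := by
        intro h
        rw [h, norm_zero] at hgt
        exact absurd hgt (by norm_num)
      have h2 : (1 : ℂ) - (ξ j)⁻¹ ≠ 0 := by
        intro h
        rw [sub_eq_zero] at h
        have := congrArg (‖·‖) h
        rw [norm_one, norm_inv] at this
        rw [eq_comm, inv_eq_one] at this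
        exact hcirc j this
      have h3 : (1 : ℂ) - (ξ j)⁻¹ * Complex.exp ((θ:ℂ) * Complex.I) ≠ 0 := by
        intro h
        rw [sub_eq_zero] at h
        have h4 := congrArg (‖·‖) h
        rw [norm_one, norm_mul, norm_inv,
          show ‖Complex.exp ((θ:ℂ) * Complex.I)‖ = 1 by
            rw [Complex.norm_exp]; simp, mul_one, eq_comm, inv_eq_one] at h4
        exact hcirc j h4
      refine ⟨-Complex.log (1 - (ξ j)⁻¹) +
          Complex.log (1 - (ξ j)⁻¹ * Complex.exp ((θ:ℂ) * Complex.I)), ?_, ?_⟩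
      · refine (hasSum_outside hgt θ).congr_fun fun m => ?_
        rcases lt_trichotomy m 0 with hm | hm | hm
        · rw [if_pos hm, if_neg (by omega : ¬ 0 < m), if_neg (asymm hgt), mul_zero, mul_zero]
        · subst hm; norm_num
        · rw [if_neg (by omega : ¬ m < 0), if_pos hm, if_pos hm, if_pos hgt]
      · rw [if_neg (asymm hgt), zero_add, Complex.exp_add,
          Complex.exp_neg (Complex.log (1 - (ξ j)⁻¹)), Complex.exp_log h2,
          Complex.exp_log h3]
        have e1 : (1:ℂ) - (ξ j)⁻¹ = (ξ j)⁻¹ * (ξ j - 1) := by field_simp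
        have e2 : (1:ℂ) - (ξ j)⁻¹ * Complex.exp ((θ:ℂ) * Complex.I)
            = (ξ j)⁻¹ * (ξ j - Complex.exp ((θ:ℂ) * Complex.I)) := by field_simp
        rw [e1, e2, mul_inv, inv_inv, div_eq_mul_inv,
          show (1:ℂ) - ξ j = -(ξ j - 1) from by ring, inv_neg,
          show ξ j * (ξ j - 1)⁻¹ * ((ξ j)⁻¹ * (ξ j - Complex.exp ((θ:ℂ) * Complex.I)))
            = (ξ j * (ξ j)⁻¹) * ((ξ j - Complex.exp ((θ:ℂ) * Complex.I)) * (ξ j - 1)⁻¹)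
            from by ring, mul_inv_cancel₀ hξ0, one_mul]
        ring
  choose L hL hexp using key
  have hFS := hasSum_sum (s := Finset.univ) (fun j (_ : j ∈ Finset.univ) => hL j)
  have hfun : ∀ m : ℤ, (Complex.exp (θ * m * Complex.I) - 1) * quasiLevyOfRoots n ξ m
      = ∑ j : Fin n,
        (if m < 0 then (Complex.exp (θ * m * Complex.I) - 1) *
            (-(((-m : ℤ) : ℂ))⁻¹ * (if ‖ξ j‖ < 1 then ξ j ^ (-m).toNat else 0))
        else if 0 < m then (Complex.exp (θ * m * Complex.I) - 1) *
            (-(((m : ℤ) : ℂ))⁻¹ * (if 1 < ‖ξ j‖ then (ξ j)⁻¹ ^ m.toNat else 0))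
        else 0) := by
    intro m
    unfold quasiLevyOfRoots
    rcases lt_trichotomy m 0 with hm | hm | hm
    · rw [if_neg (by omega : ¬ m = 0), if_pos hm, Finset.mul_sum, Finset.mul_sum]
      exact Finset.sum_congr rfl fun j _ => by rw [if_pos hm]
    · subst hm; norm_num
    · rw [if_neg (by omega : ¬ m = 0), if_neg (by omega : ¬ m < 0),
        Finset.mul_sum, Finset.mul_sum]
      exact Finset.sum_congr rfl fun j _ => by
        rw [if_neg (by omega : ¬ m < 0), if_pos hm]
  have htsum : ∑' m : ℤ, (Complex.exp (θ * m * Complex.I) - 1) * quasiLevyOfRoots n ξ m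
      = ∑ j, L j := by
    rw [tsum_congr hfun]
    exact hFS.tsum_eq
  have hcard : (Complex.I * (θ:ℂ) *
      (((@Finset.filter (Fin n) (fun j => ‖ξ j‖ < 1) (Classical.decPred _)
        Finset.univ).card : ℕ) : ℂ))
      = ∑ j : Fin n, (if ‖ξ j‖ < 1 then (Complex.I * (θ:ℂ)) else 0) := by
    rw [Finset.card_filter]
    push_cast
    rw [Finset.mul_sum]
    exact Finset.sum_congr rfl fun j _ => by split_ifs <;> simp
  rw [htsum, hcard, ← Finset.sum_add_distrib, Complex.exp_sum]
  have hone : (a (Fin.last n) : ℂ) * ∏ j : Fin n, (1 - ξ j) = 1 := by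
    have h1 := (hfact 1).symm
    rw [show (∑ j, (a j : ℂ) * (1:ℂ) ^ (j:ℕ)) = ((∑ j, a j : ℝ) : ℂ) by push_cast; ring] at h1
    rw [hsum] at h1
    simpa using h1
  have hinv : (∏ j : Fin n, ((1:ℂ) - ξ j))⁻¹ = (a (Fin.last n) : ℂ) :=
    inv_eq_of_mul_eq_one_left hone
  calc ∑ j, (a j : ℂ) * Complex.exp (θ * (j:ℕ) * Complex.I)
      = ∑ j, (a j : ℂ) * Complex.exp ((θ:ℂ) * Complex.I) ^ (j : ℕ) := by
        refine Finset.sum_congr rfl fun j _ => ?_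
        rw [show ((θ:ℂ) * ((j:ℕ):ℂ) * Complex.I) = ((j:ℕ):ℂ) * ((θ:ℂ) * Complex.I) by ring,
          Complex.exp_nat_mul]
    _ = (a (Fin.last n) : ℂ) * ∏ j : Fin n, (Complex.exp ((θ:ℂ) * Complex.I) - ξ j) :=
        hfact _
    _ = ∏ j : Fin n, (Complex.exp ((θ:ℂ) * Complex.I) - ξ j) / (1 - ξ j) := by
        rw [Finset.prod_div_distrib, div_eq_mul_inv, hinv, mul_comm]
    _ = ∏ j : Fin n, Complex.exp
          ((if ‖ξ j‖ < 1 then (Complex.I * (θ:ℂ)) else 0) + L j) :=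
        (Finset.prod_congr rfl fun j _ => (hexp j).symm)
end

section
/- Let X be a random variable taking values in {0,1,...,N} with ℙ(X = j) = a_j > 0 for all j, and suppose the characteristic function of X has zeros. Let ξ₁,...,ξ_N be the complex roots of f(w) = Σ_{j=0}^N a_j w^j. Then for all sufficiently small h > 0, the shifted polynomial f_h(w) = a_N ∏_{j=1}^N (w − ξ_j − h) has real coefficients a_{h,j} which are strictly positive, f_h has no roots on the unit circle, and the random variables X_h with distribution (Σ_j a_{h,j})^{-1} Σ_j a_{h,j} δ_j converge in distribution to X as h → 0. -/
open Complex Filter Set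

/-- Let `X` take values in `{0,…,N}` with `ℙ(X = j) = a_j > 0`, and suppose its
characteristic function has a zero. Let `ξ₁,…,ξ_N` be the roots of `f(w) = ∑ a_j w^j`.
Then for all small `h > 0`, the shifted polynomial `f_h(w) = a_N ∏ (w − ξ_j − h)` has real
coefficients `a_{h,j} > 0`, has no roots on the unit circle, and the normalized
distributions `(∑ a_{h,j})⁻¹ ∑ a_{h,j} δ_j` converge in distribution to that of `X` as
`h → 0⁺`. -/
theorem shifted_roots_approximation (N : ℕ) (a : Fin (N + 1) → ℝ)
    (hapos : ∀ j, 0 < a j) (hsum : ∑ j, a j = 1)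
    (hzero : ∃ θ : ℝ, ∑ j, (a j : ℂ) * Complex.exp (θ * (j : ℕ) * Complex.I) = 0)
    (ξ : Fin N → ℂ)
    (hfact : ∀ w : ℂ, ∑ j, (a j : ℂ) * w ^ (j : ℕ) =
      (a (Fin.last N) : ℂ) * ∏ j : Fin N, (w - ξ j)) :
    ∃ h₀ : ℝ, 0 < h₀ ∧ ∃ ah : ℝ → Fin (N + 1) → ℝ,
      (∀ h ∈ Set.Ioo (0 : ℝ) h₀,
        -- `f_h` has real coefficients `a_{h,j}`
        (∀ w : ℂ, (a (Fin.last N) : ℂ) * ∏ j : Fin N, (w - ξ j - (h : ℂ)) =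
          ∑ j, (ah h j : ℂ) * w ^ (j : ℕ)) ∧
        -- the coefficients are strictly positive
        (∀ j, 0 < ah h j) ∧
        -- `f_h` has no roots on the unit circle
        (∀ w : ℂ, ‖w‖ = 1 →
          (a (Fin.last N) : ℂ) * ∏ j : Fin N, (w - ξ j - (h : ℂ)) ≠ 0)) ∧
      -- `X_h → X` in distribution as `h → 0⁺`
      (∀ g : BoundedContinuousFunction ℝ ℝ,
        Tendsto (fun h : ℝ => ∑ j, ((∑ i, ah h i)⁻¹ * ah h j) * g ((j : ℕ) : ℝ))
          (nhdsWithin 0 (Set.Ioi 0)) (nhds (∑ j, a j * g ((j : ℕ) : ℝ)))) := by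
  classical
  -- the coefficients of f(w - h)
  set ah : ℝ → Fin (N + 1) → ℝ :=
    fun h k => ∑ i : Fin (N + 1), a i * (Nat.choose (i : ℕ) (k : ℕ)) * (-h) ^ ((i : ℕ) - (k : ℕ))
    with hah
  -- value at 0
  have ah0 : ∀ k, ah 0 k = a k := by
    intro k
    simp only [hah]
    rw [Finset.sum_eq_single k]
    · simp
    · intro i _ hik
      rcases lt_or_gt_of_ne (fun hc : (i : ℕ) = (k : ℕ) => hik (Fin.ext hc)) with hlt | hgt
      · rw [Nat.choose_eq_zero_of_lt hlt]; simp
      · rw [neg_zero, zero_pow (by omega : (i : ℕ) - (k : ℕ) ≠ 0)]; simp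
    · simp
  -- continuity of the coefficients
  have ahcont : ∀ k, Continuous (fun h : ℝ => ah h k) := by
    intro k
    rw [hah]
    exact continuous_finset_sum _ fun i _ => by fun_prop
  -- the key algebraic identity
  have key : ∀ (h : ℝ) (z : ℂ),
      ∑ k : Fin (N + 1), ((ah h k : ℝ) : ℂ) * z ^ (k : ℕ)
        = ∑ j : Fin (N + 1), (a j : ℂ) * (z - (h : ℂ)) ^ (j : ℕ) := by
    intro h z
    have binom : ∀ i : Fin (N + 1),
        (z - (h : ℂ)) ^ (i : ℕ)
          = ∑ k : Fin (N + 1),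
              (Nat.choose (i : ℕ) (k : ℕ) : ℂ) * (-(h : ℂ)) ^ ((i : ℕ) - (k : ℕ)) * z ^ (k : ℕ) := by
      intro i
      rw [sub_eq_add_neg, add_pow]
      rw [Fin.sum_univ_eq_sum_range
        (fun k => (Nat.choose (i : ℕ) k : ℂ) * (-(h : ℂ)) ^ ((i : ℕ) - k) * z ^ k) (N + 1)]
      rw [← Finset.sum_subset (Finset.range_subset_range.2 (by omega : (i : ℕ) + 1 ≤ N + 1))
        (fun k hk hk2 => by
          have hik : (i : ℕ) < k := by
            simp only [Finset.mem_range] at hk hk2; omega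
          rw [Nat.choose_eq_zero_of_lt hik]; simp)]
      exact Finset.sum_congr rfl fun k _ => by ring
    calc ∑ k : Fin (N + 1), ((ah h k : ℝ) : ℂ) * z ^ (k : ℕ)
        = ∑ k : Fin (N + 1), ∑ i : Fin (N + 1),
            (a i : ℂ) * (Nat.choose (i : ℕ) (k : ℕ) : ℂ) * (-(h : ℂ)) ^ ((i : ℕ) - (k : ℕ))
              * z ^ (k : ℕ) := by
          refine Finset.sum_congr rfl fun k _ => ?_
          rw [hah]
          push_cast
          rw [Finset.sum_mul]
      _ = ∑ i : Fin (N + 1), ∑ k : Fin (N + 1),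
            (a i : ℂ) * (Nat.choose (i : ℕ) (k : ℕ) : ℂ) * (-(h : ℂ)) ^ ((i : ℕ) - (k : ℕ))
              * z ^ (k : ℕ) := Finset.sum_comm
      _ = ∑ j : Fin (N + 1), (a j : ℂ) * (z - (h : ℂ)) ^ (j : ℕ) := by
          refine Finset.sum_congr rfl fun i _ => ?_
          rw [binom i, Finset.mul_sum]
          exact Finset.sum_congr rfl fun k _ => by ring
  -- eventually the coefficients are positive
  have h1 : ∀ᶠ h : ℝ in nhdsWithin (0 : ℝ) (Set.Ioi (0:ℝ)), ∀ k, 0 < ah h k := by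
    apply eventually_nhdsWithin_of_eventually_nhds
    rw [eventually_all]
    intro k
    have : Tendsto (fun h : ℝ => ah h k) (nhds 0) (nhds (a k)) := by
      have := (ahcont k).tendsto 0
      rwa [ah0 k] at this
    exact this.eventually_const_lt (hapos k)
  -- eventually no shifted root is on the unit circle
  have h2 : ∀ᶠ h : ℝ in nhdsWithin (0 : ℝ) (Set.Ioi (0:ℝ)),
      ∀ j : Fin N, ‖ξ j + (h : ℂ)‖ ≠ 1 := by
    rw [eventually_all]
    intro j
    have hkey : ∀ h : ℝ, Complex.normSq (ξ j + (h : ℂ))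
        = Complex.normSq (ξ j) + (2 * (ξ j).re * h + h ^ 2) := by
      intro h
      simp [Complex.normSq_apply]
      ring
    have habs : ∀ h : ℝ, ‖ξ j + (h : ℂ)‖ = 1 → Complex.normSq (ξ j + (h : ℂ)) = 1 := by
      intro h hh
      rw [← Complex.sq_norm, hh]; norm_num
    by_cases hc : Complex.normSq (ξ j) = 1
    · -- choose ε depending on the sign of Re ξ j
      set b := (ξ j).re with hb
      set ε : ℝ := if 0 ≤ b then 1 else -b with hε
      have hεpos : 0 < ε := by
        rw [hε]; split_ifs with hbb
        · norm_num
        · linarith [not_le.mp hbb]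
      filter_upwards [Ioo_mem_nhdsGT_of_mem (Set.left_mem_Ico.2 hεpos)] with h hh habs1
      have hns := habs h habs1
      rw [hkey, hc] at hns
      have h2b : 2 * b * h + h ^ 2 = 0 := by linarith
      have hfac : h * (2 * b + h) = 0 := by ring_nf; linarith [h2b]
      rcases mul_eq_zero.mp hfac with h0 | h0
      · exact absurd h0 (ne_of_gt hh.1)
      · rw [hε] at hh
        split_ifs at hh with hbb
        · have : 0 < 2 * b + h := by linarith [hh.1]
          linarith
        · have hbneg : b < 0 := not_le.mp hbb
          have : 2 * b + h < 0 := by linarith [hh.2]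
          linarith
    · -- normSq (ξ j + h) → normSq ξ j ≠ 1
      apply eventually_nhdsWithin_of_eventually_nhds
      have hcont : Tendsto (fun h : ℝ => Complex.normSq (ξ j + (h : ℂ)))
          (nhds 0) (nhds (Complex.normSq (ξ j))) := by
        have : Continuous (fun h : ℝ => Complex.normSq (ξ j + (h : ℂ))) :=
          Complex.continuous_normSq.comp (by fun_prop)
        have := this.tendsto 0
        simpa using this
      filter_upwards [hcont.eventually_ne hc] with h hh habs1
      exact hh (habs h habs1)
  obtain ⟨h₀, hh₀, hsub⟩ := mem_nhdsGT_iff_exists_Ioo_subset.mp (h1.and h2)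
  refine ⟨h₀, hh₀, ah, fun h hh => ?_, fun g => ?_⟩
  · obtain ⟨hp, hcirc⟩ := hsub hh
    refine ⟨fun w => ?_, hp, fun w hw => ?_⟩
    · calc (a (Fin.last N) : ℂ) * ∏ j : Fin N, (w - ξ j - (h : ℂ))
          = (a (Fin.last N) : ℂ) * ∏ j : Fin N, ((w - (h : ℂ)) - ξ j) := by
            congr 1
            exact Finset.prod_congr rfl fun j _ => by ring
        _ = ∑ j, (a j : ℂ) * (w - (h : ℂ)) ^ (j : ℕ) := (hfact (w - (h : ℂ))).symm
        _ = ∑ j, ((ah h j : ℝ) : ℂ) * w ^ (j : ℕ) := (key h w).symm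
    · refine mul_ne_zero (Complex.ofReal_ne_zero.2 (hapos _).ne') ?_
      rw [Finset.prod_ne_zero_iff]
      intro j _ h0
      have hwj : w = ξ j + (h : ℂ) := by linear_combination h0
      exact hcirc j (hwj ▸ hw)
  · -- convergence in distribution
    have hS0 : (∑ i, ah 0 i) = 1 := by
      rw [Finset.sum_congr rfl fun i _ => ah0 i]; exact hsum
    have hSinv : ContinuousAt (fun h : ℝ => (∑ i, ah h i)⁻¹) 0 := by
      have hc : Continuous (fun h : ℝ => ∑ i, ah h i) :=
        continuous_finset_sum _ fun i _ => ahcont i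
      exact hc.continuousAt.inv₀ (by rw [hS0]; norm_num)
    have hCA : Tendsto
        (fun h : ℝ => ∑ j, ((∑ i, ah h i)⁻¹ * ah h j) * g ((j : ℕ) : ℝ)) (nhds 0)
        (nhds (∑ j, ((∑ i, ah 0 i)⁻¹ * ah 0 j) * g ((j : ℕ) : ℝ))) := by
      apply tendsto_finset_sum
      intro j _
      exact (hSinv.mul (ahcont j).continuousAt).mul continuousAt_const
    have hval : (∑ j, ((∑ i, ah 0 i)⁻¹ * ah 0 j) * g ((j : ℕ) : ℝ))
        = ∑ j, a j * g ((j : ℕ) : ℝ) := by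
      rw [hS0]
      refine Finset.sum_congr rfl fun j _ => ?_
      rw [ah0 j]
      norm_num
    rw [← hval]
    exact tendsto_nhdsWithin_of_tendsto_nhds hCA
end
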